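/- arXiv:1710.09417 — 5 statements merged into one kernel-verified Lean document; each statement's English description precedes it below -/
import Mathlib

section
/- Suppose that Σ_{j∈P_a} e^{−w_{a,j}} = 1 for every a ∈ A, and that some a* ∈ A has |P_{a*}| ≥ 2. If there exists a valid assignment, then every maximum-weight stable set S of the associated graph G satisfies z(S) > M·(n_A − 1). -/
/-- The associated graph of a `K`-Matching instance: vertices are pairs `(a, j)` with
`j ∈ P a`; distinct vertices `(a,j)`, `(a',j')` are adjacent iff `a = a'` or
(`a ≠ a'` and) `j ∩ j' ≠ ∅`. -/
def kmGraph {A B : Type*} [DecidableEq B] (P : A → Finset (Finset B)) :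
    SimpleGraph {v : A × Finset B // v.2 ∈ P v.1} where
  Adj v w := v ≠ w ∧ (v.1.1 = w.1.1 ∨ (v.1.2 ∩ w.1.2).Nonempty)
  symm := by
    constructor
    rintro v w ⟨h1, h2⟩
    refine ⟨h1.symm, ?_⟩
    rcases h2 with h | h
    · exact Or.inl h.symm
    · exact Or.inr (by rwa [Finset.inter_comm])
  loopless := ⟨fun v h => h.1 rfl⟩

/-- if the weights are normalized (`∑_{j ∈ P a} e^{−w_{a,j}} = 1`), some
`a*` has `|P a*| ≥ 2`, and a valid assignment exists, then every maximum-weight stable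
set `S` of the associated graph satisfies `z(S) > M·(n_A − 1)`. -/
theorem stmt_2 {A B : Type*} [Fintype A] [DecidableEq A] [DecidableEq B]
    (K : ℕ) (P : A → Finset (Finset B))
    (hPK : ∀ a, ∀ j ∈ P a, j.card ≤ K)
    (w : A → Finset B → ℝ) (hw : ∀ a, ∀ j ∈ P a, 0 ≤ w a j)
    (hnorm : ∀ a, ∑ j ∈ P a, Real.exp (-(w a j)) = 1)
    (hstar : ∃ a : A, 2 ≤ (P a).card)
    (hfeas : ∃ f : A → Finset B, (∀ a, f a ∈ P a) ∧
      (∀ a₁ a₂ : A, a₁ ≠ a₂ → f a₁ ∩ f a₂ = ∅))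
    (M : ℝ) (hM : M = ∑ a, ∑ j ∈ P a, w a j)
    (S : Finset {v : A × Finset B // v.2 ∈ P v.1})
    (hSstable : ∀ u ∈ S, ∀ v ∈ S, ¬ (kmGraph P).Adj u v)
    (hSmax : ∀ S' : Finset {v : A × Finset B // v.2 ∈ P v.1},
      (∀ u ∈ S', ∀ v ∈ S', ¬ (kmGraph P).Adj u v) →
      ∑ v ∈ S', (M - w v.1.1 v.1.2) ≤ ∑ v ∈ S, (M - w v.1.1 v.1.2)) :
    M * ((Fintype.card A : ℝ) - 1) < ∑ v ∈ S, (M - w v.1.1 v.1.2) := by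
  obtain ⟨f, hf, hdisj⟩ := hfeas
  obtain ⟨a0, ha0⟩ := hstar
  set g : A → {v : A × Finset B // v.2 ∈ P v.1} := fun a => ⟨(a, f a), hf a⟩ with hg
  have hginj : Function.Injective g := fun a b h => congrArg (fun v => v.1.1) h
  have hstab : ∀ u ∈ Finset.univ.image g, ∀ v ∈ Finset.univ.image g,
      ¬ (kmGraph P).Adj u v := by
    simp only [Finset.mem_image]
    rintro u ⟨a, -, rfl⟩ v ⟨b, -, rfl⟩ ⟨hne, hadj⟩
    have hab : a ≠ b := fun h => hne (by subst h; rfl)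
    rcases hadj with h | h
    · exact hab h
    · rw [show (g a).1.2 = f a from rfl, show (g b).1.2 = f b from rfl,
        hdisj a b hab] at h
      exact Finset.not_nonempty_empty h
  have hle := hSmax _ hstab
  have hsum : ∑ v ∈ Finset.univ.image g, (M - w v.1.1 v.1.2)
      = ∑ a, (M - w a (f a)) := by
    rw [Finset.sum_image (fun a _ b _ h => hginj h)]
  have hkey : ∑ a, w a (f a) < M := by
    rw [hM]
    apply Finset.sum_lt_sum
    · intro a _
      exact Finset.single_le_sum (fun j hj => hw a j hj) (hf a)
    · refine ⟨a0, Finset.mem_univ _, ?_⟩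
      obtain ⟨j, hj, hjne⟩ : ∃ j ∈ P a0, j ≠ f a0 := by
        by_contra hc
        push_neg at hc
        have hsub : P a0 ⊆ {f a0} := fun j hj => Finset.mem_singleton.mpr (hc j hj)
        have := Finset.card_le_card hsub
        simp at this; omega
      have hwj : 0 < w a0 j := by
        have h1 : Real.exp (-(w a0 j)) < 1 := by
          have hn := hnorm a0
          have hsub : ({j, f a0} : Finset (Finset B)) ⊆ P a0 := by
            intro x hx
            simp only [Finset.mem_insert, Finset.mem_singleton] at hx
            rcases hx with rfl | rfl
            exacts [hj, hf a0]
          have hsplit : Real.exp (-(w a0 j)) + Real.exp (-(w a0 (f a0))) ≤ 1 := by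
            rw [← hn]
            calc Real.exp (-(w a0 j)) + Real.exp (-(w a0 (f a0)))
                = ∑ x ∈ ({j, f a0} : Finset (Finset B)), Real.exp (-(w a0 x)) := by
                  rw [Finset.sum_pair hjne]
              _ ≤ _ := Finset.sum_le_sum_of_subset_of_nonneg hsub
                  (fun i _ _ => (Real.exp_pos _).le)
          nlinarith [Real.exp_pos (-(w a0 (f a0)))]
        by_contra h
        push_neg at h
        have h0 : w a0 j = 0 := le_antisymm h (hw a0 j hj)
        rw [h0] at h1; simp at h1
      have hsplit : ∑ j' ∈ P a0, w a0 j'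
          = w a0 j + ∑ j' ∈ (P a0).erase j, w a0 j' := (Finset.add_sum_erase _ _ hj).symm
      have hmem : f a0 ∈ (P a0).erase j :=
        Finset.mem_erase.mpr ⟨fun h => hjne h.symm, hf a0⟩
      have := Finset.single_le_sum
        (fun j' hj' => hw a0 j' (Finset.mem_of_mem_erase hj')) hmem
      linarith
  have hcard : ∑ a : A, (M - w a (f a))
      = (Fintype.card A : ℝ) * M - ∑ a, w a (f a) := by
    rw [Finset.sum_sub_distrib, Finset.sum_const, Finset.card_univ, nsmul_eq_mul]
  rw [hsum, hcard] at hle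
  nlinarith
end

section
/- If S is a stable set of the associated graph G with z(S) > M·(n_A − 1), then for every a ∈ A there is exactly one j ∈ P_a with (a,j) ∈ S, and the function f defined by f(a) = j whenever (a,j) ∈ S is a valid assignment; moreover z(S) = M·n_A − w(f). -/
/-- if `S` is a stable set of the associated graph with
`z(S) > M·(n_A − 1)`, then every `a ∈ A` lies under exactly one vertex of `S`, and any
function `f` with `f a = j` whenever `(a,j) ∈ S` is a valid assignment with
`z(S) = M·n_A − w(f)`. -/
theorem stmt_3 {A B : Type*} [Fintype A] [DecidableEq A] [DecidableEq B]
    (K : ℕ) (P : A → Finset (Finset B))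
    (hPK : ∀ a, ∀ j ∈ P a, j.card ≤ K)
    (w : A → Finset B → ℝ) (hw : ∀ a, ∀ j ∈ P a, 0 ≤ w a j)
    (M : ℝ) (hM : M = ∑ a, ∑ j ∈ P a, w a j)
    (S : Finset {v : A × Finset B // v.2 ∈ P v.1})
    (hSstable : ∀ u ∈ S, ∀ v ∈ S, ¬ (kmGraph P).Adj u v)
    (hSgt : M * ((Fintype.card A : ℝ) - 1) < ∑ v ∈ S, (M - w v.1.1 v.1.2)) :
    (∀ a : A, ∃! v : {v : A × Finset B // v.2 ∈ P v.1}, v ∈ S ∧ v.1.1 = a) ∧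
    ∀ f : A → Finset B, (∀ v ∈ S, f v.1.1 = v.1.2) →
      (∀ a, f a ∈ P a) ∧
      (∀ a₁ a₂ : A, a₁ ≠ a₂ → f a₁ ∩ f a₂ = ∅) ∧
      ∑ v ∈ S, (M - w v.1.1 v.1.2) = M * (Fintype.card A : ℝ) - ∑ a, w a (f a) := by
  have hM0 : 0 ≤ M := by
    rw [hM]
    exact Finset.sum_nonneg fun a _ => Finset.sum_nonneg fun j hj => hw a j hj
  have hwle : ∀ v : {v : A × Finset B // v.2 ∈ P v.1}, w v.1.1 v.1.2 ≤ M := by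
    intro v
    rw [hM]
    calc w v.1.1 v.1.2 ≤ ∑ j ∈ P v.1.1, w v.1.1 j :=
          Finset.single_le_sum (fun j hj => hw _ j hj) v.2
      _ ≤ ∑ a, ∑ j ∈ P a, w a j :=
          Finset.single_le_sum
            (fun a _ => Finset.sum_nonneg fun j hj => hw a j hj) (Finset.mem_univ _)
  -- injectivity of the projection on S
  have hinj : ∀ u ∈ S, ∀ v ∈ S, u.1.1 = v.1.1 → u = v := by
    intro u hu v hv h
    by_contra hne
    exact hSstable u hu v hv ⟨hne, Or.inl h⟩
  have hcard_le : S.card ≤ Fintype.card A := by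
    have := Finset.card_le_card_of_injOn (fun v => v.1.1)
      (fun v _ => Finset.mem_univ _) (fun u hu v hv h => hinj u hu v hv h)
    simpa using this
  have hcard_ge : Fintype.card A ≤ S.card := by
    by_contra hlt
    push_neg at hlt
    have h1 : 1 ≤ Fintype.card A := Nat.one_le_iff_ne_zero.2 (by omega)
    have hSc : (S.card : ℝ) ≤ (Fintype.card A : ℝ) - 1 := by
      have : S.card ≤ Fintype.card A - 1 := by omega
      have := (Nat.cast_le (α := ℝ)).2 this
      rw [Nat.cast_sub h1] at this
      simpa using this
    have hsum : ∑ v ∈ S, (M - w v.1.1 v.1.2) ≤ (S.card : ℝ) * M := by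
      calc ∑ v ∈ S, (M - w v.1.1 v.1.2) ≤ ∑ _v ∈ S, M :=
            Finset.sum_le_sum fun v _ => by
              have := hw v.1.1 v.1.2 v.2; linarith
        _ = (S.card : ℝ) * M := by rw [Finset.sum_const, nsmul_eq_mul]
    have : ∑ v ∈ S, (M - w v.1.1 v.1.2) ≤ M * ((Fintype.card A : ℝ) - 1) := by
      calc ∑ v ∈ S, (M - w v.1.1 v.1.2) ≤ (S.card : ℝ) * M := hsum
        _ ≤ ((Fintype.card A : ℝ) - 1) * M := by
            apply mul_le_mul_of_nonneg_right hSc hM0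
        _ = M * ((Fintype.card A : ℝ) - 1) := mul_comm _ _
    linarith
  have hcard : S.card = Fintype.card A := le_antisymm hcard_le hcard_ge
  have himg : S.image (fun v => v.1.1) = Finset.univ := by
    apply Finset.eq_univ_of_card
    rw [Finset.card_image_of_injOn (fun u hu v hv h => hinj u hu v hv h), hcard]
  have hex : ∀ a : A, ∃! v : {v : A × Finset B // v.2 ∈ P v.1}, v ∈ S ∧ v.1.1 = a := by
    intro a
    have : a ∈ S.image (fun v => v.1.1) := himg ▸ Finset.mem_univ a
    obtain ⟨v, hv, hva⟩ := Finset.mem_image.1 this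
    exact ⟨v, ⟨hv, hva⟩, fun u ⟨hu, hua⟩ => hinj u hu v hv (hua.trans hva.symm)⟩
  refine ⟨hex, fun f hf => ?_⟩
  have hfP : ∀ a, f a ∈ P a := by
    intro a
    obtain ⟨v, ⟨hv, hva⟩, _⟩ := hex a
    have := hf v hv
    rw [hva] at this
    rw [this, ← hva]
    exact v.2
  refine ⟨hfP, ?_, ?_⟩
  · intro a₁ a₂ hne
    obtain ⟨u, ⟨hu, hua⟩, _⟩ := hex a₁
    obtain ⟨v, ⟨hv, hva⟩, _⟩ := hex a₂
    have huv : u ≠ v := fun h => hne (hua ▸ hva ▸ congrArg (fun x => x.1.1) h)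
    have hadj := hSstable u hu v hv
    have : ¬ (u.1.2 ∩ v.1.2).Nonempty := fun h => hadj ⟨huv, Or.inr h⟩
    have hemp := Finset.not_nonempty_iff_eq_empty.1 this
    have h1 := hf u hu
    have h2 := hf v hv
    rw [hua] at h1
    rw [hva] at h2
    rw [h1, h2, hemp]
  · have hsumw : ∑ v ∈ S, w v.1.1 v.1.2 = ∑ a, w a (f a) := by
      apply Finset.sum_bij (fun v _ => v.1.1)
      · intro v _; exact Finset.mem_univ _
      · intro u hu v hv h; exact hinj u hu v hv h
      · intro a _
        have : a ∈ S.image (fun v => v.1.1) := himg ▸ Finset.mem_univ a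
        obtain ⟨v, hv, hva⟩ := Finset.mem_image.1 this
        exact ⟨v, hv, hva⟩
      · intro v hv
        rw [hf v hv]
    rw [Finset.sum_sub_distrib, Finset.sum_const, nsmul_eq_mul, hcard, hsumw, mul_comm]
end

section
/- Let S be a maximum-weight stable set of the associated graph G with z(S) > M·(n_A − 1), and let f be the valid assignment defined by f(a) = j whenever (a,j) ∈ S. Then f is an optimal assignment, i.e., w(f) ≤ w(g) for every valid assignment g. -/
/-- if `S` is a maximum-weight stable set of the associated graph with
`z(S) > M·(n_A − 1)` and `f` is the assignment defined by `f a = j` whenever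
`(a,j) ∈ S`, then `f` is optimal: `w(f) ≤ w(g)` for every valid assignment `g`. -/
theorem stmt_4 {A B : Type*} [Fintype A] [DecidableEq A] [DecidableEq B]
    (K : ℕ) (P : A → Finset (Finset B))
    (hPK : ∀ a, ∀ j ∈ P a, j.card ≤ K)
    (w : A → Finset B → ℝ) (hw : ∀ a, ∀ j ∈ P a, 0 ≤ w a j)
    (M : ℝ) (hM : M = ∑ a, ∑ j ∈ P a, w a j)
    (S : Finset {v : A × Finset B // v.2 ∈ P v.1})
    (hSstable : ∀ u ∈ S, ∀ v ∈ S, ¬ (kmGraph P).Adj u v)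
    (hSmax : ∀ S' : Finset {v : A × Finset B // v.2 ∈ P v.1},
      (∀ u ∈ S', ∀ v ∈ S', ¬ (kmGraph P).Adj u v) →
      ∑ v ∈ S', (M - w v.1.1 v.1.2) ≤ ∑ v ∈ S, (M - w v.1.1 v.1.2))
    (hSgt : M * ((Fintype.card A : ℝ) - 1) < ∑ v ∈ S, (M - w v.1.1 v.1.2))
    (f : A → Finset B) (hfS : ∀ v ∈ S, f v.1.1 = v.1.2) :
    ∀ g : A → Finset B, (∀ a, g a ∈ P a) →
      (∀ a₁ a₂ : A, a₁ ≠ a₂ → g a₁ ∩ g a₂ = ∅) →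
      ∑ a, w a (f a) ≤ ∑ a, w a (g a) := by
  intro g hgP hgdisj
  -- nonnegativity of M
  have hM0 : 0 ≤ M := by
    rw [hM]
    exact Finset.sum_nonneg fun a _ =>
      Finset.sum_nonneg fun j hj => hw a j hj
  -- injectivity of the first projection on S
  have hinj : ∀ u ∈ S, ∀ v ∈ S, u.1.1 = v.1.1 → u = v := by
    intro u hu v hv h
    by_contra hne
    exact hSstable u hu v hv ⟨hne, Or.inl h⟩
  -- the image of S under first projection
  set T : Finset A := S.image (fun v => v.1.1) with hT
  have hcardT : T.card = S.card :=
    Finset.card_image_of_injOn (fun u hu v hv h => hinj u hu v hv h)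
  -- each term of z(S) is ≤ M
  have hterm : ∀ v ∈ S, (M - w v.1.1 v.1.2) ≤ M := by
    intro v _
    have := hw v.1.1 v.1.2 v.2
    linarith
  -- T = univ
  have hTuniv : T = Finset.univ := by
    by_contra hne
    have hsub : T ⊂ Finset.univ := (Finset.subset_univ T).ssubset_of_ne hne
    have hlt : T.card < Fintype.card A := by
      simpa [Finset.card_univ] using Finset.card_lt_card hsub
    have hle : S.card ≤ Fintype.card A - 1 := by omega
    have h1 : ∑ v ∈ S, (M - w v.1.1 v.1.2) ≤ (S.card : ℝ) * M := by
      calc ∑ v ∈ S, (M - w v.1.1 v.1.2) ≤ ∑ v ∈ S, M :=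
            Finset.sum_le_sum hterm
        _ = (S.card : ℝ) * M := by simp [Finset.sum_const, mul_comm]
    have hn1 : 1 ≤ Fintype.card A := by omega
    have h2 : (S.card : ℝ) ≤ (Fintype.card A : ℝ) - 1 := by
      have h : (S.card : ℝ) ≤ ((Fintype.card A - 1 : ℕ) : ℝ) := by
        exact_mod_cast hle
      rw [Nat.cast_sub hn1] at h
      simpa using h
    have h3 : (S.card : ℝ) * M ≤ ((Fintype.card A : ℝ) - 1) * M :=
      mul_le_mul_of_nonneg_right h2 hM0
    nlinarith [hSgt]
  -- z(S) = ∑ a, (M - w a (f a))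
  have hzS : ∑ v ∈ S, (M - w v.1.1 v.1.2) = ∑ a, (M - w a (f a)) := by
    refine Finset.sum_bij (fun v _ => v.1.1) (fun v _ => Finset.mem_univ _)
      (fun u hu v hv h => hinj u hu v hv h) ?_ ?_
    · intro a _
      have ha : a ∈ T := by rw [hTuniv]; exact Finset.mem_univ a
      obtain ⟨v, hv, hva⟩ := Finset.mem_image.mp ha
      exact ⟨v, hv, hva⟩
    · intro v hv
      rw [hfS v hv]
  -- the stable set associated to g
  set S' : Finset {v : A × Finset B // v.2 ∈ P v.1} :=
    Finset.univ.image (fun a => ⟨(a, g a), hgP a⟩) with hS'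
  have hS'stable : ∀ u ∈ S', ∀ v ∈ S', ¬ (kmGraph P).Adj u v := by
    intro u hu v hv hadj
    obtain ⟨a, _, rfl⟩ := Finset.mem_image.mp hu
    obtain ⟨b, _, rfl⟩ := Finset.mem_image.mp hv
    rcases hadj.2 with h | h
    · simp only at h
      subst h
      exact hadj.1 rfl
    · rcases eq_or_ne a b with rfl | hab
      · exact hadj.1 rfl
      · have := hgdisj a b hab
        simp only at h
        rw [this] at h
        exact Finset.not_nonempty_empty h
  have hzS' : ∑ v ∈ S', (M - w v.1.1 v.1.2) = ∑ a, (M - w a (g a)) := by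
    rw [hS', Finset.sum_image]
    intro a _ b _ h
    have := congrArg (fun x => x.1.1) h
    simpa using this
  have hkey := hSmax S' hS'stable
  rw [hzS', hzS] at hkey
  rw [Finset.sum_sub_distrib, Finset.sum_sub_distrib] at hkey
  linarith
end

section
/- Let K ≥ 1 and let G be the associated graph of any K-Matching instance. Then G is K_{1,K+2}-free: there is no vertex v of G together with K+2 pairwise non-adjacent vertices u₁, …, u_{K+2}, all distinct from v and all adjacent to v (equivalently, the star K_{1,K+2} is not an induced subgraph of G). -/
/-- the associated graph of any `K`-Matching instance (`K ≥ 1`) is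
`K_{1,K+2}`-free: there is no vertex `v` together with `K+2` pairwise distinct,
pairwise non-adjacent vertices, all distinct from `v` and all adjacent to `v`. -/
theorem stmt_5 {A B : Type*} [DecidableEq B]
    (K : ℕ) (hK : 1 ≤ K) (P : A → Finset (Finset B))
    (hPK : ∀ a, ∀ j ∈ P a, j.card ≤ K) :
    ¬ ∃ (v : {v : A × Finset B // v.2 ∈ P v.1})
        (u : Fin (K + 2) → {v : A × Finset B // v.2 ∈ P v.1}),
        Function.Injective u ∧
        (∀ i, u i ≠ v) ∧
        (∀ i, (kmGraph P).Adj v (u i)) ∧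
        (∀ i i' : Fin (K + 2), i ≠ i' → ¬ (kmGraph P).Adj (u i) (u i')) := by
  rintro ⟨v, u, hinj, hne, hadj, hnon⟩
  classical
  -- indices whose set intersects v's set
  set T : Finset (Fin (K + 2)) :=
    Finset.univ.filter (fun i => ((v : A × Finset B).2 ∩ (u i : A × Finset B).2).Nonempty) with hT
  -- non-adjacent pairs don't intersect and have distinct first coords... key: complement ≤ 1
  have hcompl : Tᶜ.card ≤ 1 := by
    rw [Finset.card_le_one]
    intro i hi i' hi' 
    by_contra hii
    simp only [hT, Finset.mem_compl, Finset.mem_filter, Finset.mem_univ, true_and] at hi hi'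
    -- both have same first coord as v
    have h1 : (u i : A × Finset B).1 = (v : A × Finset B).1 := by
      rcases (hadj i).2 with h | h
      · exact h.symm
      · exact absurd h hi
    have h2 : (u i' : A × Finset B).1 = (v : A × Finset B).1 := by
      rcases (hadj i').2 with h | h
      · exact h.symm
      · exact absurd h hi'
    exact hnon i i' hii ⟨fun h => hii (hinj h), Or.inl (h1.trans h2.symm)⟩
  have hTcard : K + 1 ≤ T.card := by
    have := Finset.card_compl_add_card T
    simp only [Finset.card_univ, Fintype.card_fin] at this
    omega
  -- choose witnesses
  choose b hb using fun (i : T) =>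
    (Finset.mem_filter.mp i.2).2
  have hbinj : Function.Injective b := by
    intro i i' h
    by_contra hii
    have hne' : (i : Fin (K + 2)) ≠ (i' : Fin (K + 2)) := fun hh =>
      hii (Subtype.ext hh)
    have : ((u i : A × Finset B).2 ∩ (u i' : A × Finset B).2).Nonempty :=
      ⟨b i, Finset.mem_inter.mpr ⟨(Finset.mem_inter.mp (hb i)).2,
        h ▸ (Finset.mem_inter.mp (hb i')).2⟩⟩
    exact hnon i i' hne' ⟨fun hh => hne' (hinj hh), Or.inr this⟩
  have hmaps : ∀ i : T, b i ∈ (v : A × Finset B).2 := fun i =>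
    (Finset.mem_inter.mp (hb i)).1
  have hcard : T.card ≤ (v : A × Finset B).2.card := by
    have h := Fintype.card_le_of_injective
      (fun i : T => (⟨b i, hmaps i⟩ : {x // x ∈ (v : A × Finset B).2}))
      (fun x y h => hbinj (by simpa using congrArg Subtype.val h))
    simpa using h
  have hK' : (v : A × Finset B).2.card ≤ K := hPK _ _ v.2
  omega
end

section
/- Let G be the associated graph of a 1-Matching instance, i.e., one in which every j ∈ P_a has cardinality at most 1. Then G is isomorphic to the line graph of a bipartite graph. Concretely, letting H be the bipartite graph with parts A and B ∪ {∅_a : a ∈ A, ∅ ∈ P_a} whose edges are {a, b} for each a ∈ A and {b} ∈ P_a, together with {a, ∅_a} for each a ∈ A with ∅ ∈ P_a, the map sending (a, {b}) to the edge {a,b} and (a, ∅) to the edge {a, ∅_a} is a graph isomorphism from G onto the line graph of H. -/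
/-- The bipartite graph `H` of a 1-Matching instance: one part is `A`, the other is
`B` together with a copy `∅_a` of `A` (used when `∅ ∈ P a`); the edges are `{a, b}`
for `{b} ∈ P a` and `{a, ∅_a}` for `∅ ∈ P a`. -/
def bipH {A B : Type*} (P : A → Finset (Finset B)) : SimpleGraph (A ⊕ (B ⊕ A)) where
  Adj x y :=
    (∃ a b, ({b} : Finset B) ∈ P a ∧
      ((x = Sum.inl a ∧ y = Sum.inr (Sum.inl b)) ∨
       (y = Sum.inl a ∧ x = Sum.inr (Sum.inl b)))) ∨
    (∃ a, (∅ : Finset B) ∈ P a ∧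
      ((x = Sum.inl a ∧ y = Sum.inr (Sum.inr a)) ∨
       (y = Sum.inl a ∧ x = Sum.inr (Sum.inr a))))
  symm := by
    constructor
    rintro x y (⟨a, b, hm, h | h⟩ | ⟨a, hm, h | h⟩)
    · exact Or.inl ⟨a, b, hm, Or.inr h⟩
    · exact Or.inl ⟨a, b, hm, Or.inl h⟩
    · exact Or.inr ⟨a, hm, Or.inr h⟩
    · exact Or.inr ⟨a, hm, Or.inl h⟩
  loopless := by
    constructor
    rintro x (⟨a, b, _, ⟨h1, h2⟩ | ⟨h1, h2⟩⟩ | ⟨a, _, ⟨h1, h2⟩ | ⟨h1, h2⟩⟩) <;>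
      simp_all

section Aux
variable {A B : Type*} [DecidableEq B] (P : A → Finset (Finset B))

noncomputable def km2edge (v : {v : A × Finset B // v.2 ∈ P v.1}) : Sym2 (A ⊕ (B ⊕ A)) :=
  if h : v.1.2.Nonempty then s(Sum.inl v.1.1, Sum.inr (Sum.inl h.choose))
  else s(Sum.inl v.1.1, Sum.inr (Sum.inr v.1.1))


lemma km2edge_spec (hP1 : ∀ a, ∀ j ∈ P a, j.card ≤ 1) (v : {v : A × Finset B // v.2 ∈ P v.1}) :
    (∃ b, v.1.2 = {b} ∧ km2edge P v = s(Sum.inl v.1.1, Sum.inr (Sum.inl b))) ∨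
    (v.1.2 = ∅ ∧ km2edge P v = s(Sum.inl v.1.1, Sum.inr (Sum.inr v.1.1))) := by
  by_cases h : v.1.2.Nonempty
  · refine Or.inl ⟨h.choose, ?_, by rw [km2edge, dif_pos h]⟩
    have h1 := Finset.card_le_one.mp (hP1 _ _ v.2)
    exact Finset.eq_singleton_iff_unique_mem.mpr ⟨h.choose_spec, fun x hx => h1 x hx _ h.choose_spec⟩
  · exact Or.inr ⟨Finset.not_nonempty_iff_eq_empty.mp h, by rw [km2edge, dif_neg h]⟩

lemma km2edge_mem (hP1 : ∀ a, ∀ j ∈ P a, j.card ≤ 1) (v : {v : A × Finset B // v.2 ∈ P v.1}) :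
    km2edge P v ∈ (bipH P).edgeSet := by
  rcases km2edge_spec P hP1 v with ⟨b, hj, he⟩ | ⟨hj, he⟩ <;> rw [he, SimpleGraph.mem_edgeSet]
  · exact Or.inl ⟨v.1.1, b, hj ▸ v.2, Or.inl ⟨rfl, rfl⟩⟩
  · exact Or.inr ⟨v.1.1, hj ▸ v.2, Or.inl ⟨rfl, rfl⟩⟩

lemma km2edge_singleton (hP1 : ∀ a, ∀ j ∈ P a, j.card ≤ 1) (a : A) (b : B) (h : ({b} : Finset B) ∈ P a) :
    km2edge P ⟨(a, {b}), h⟩ = s(Sum.inl a, Sum.inr (Sum.inl b)) := by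
  rcases km2edge_spec P hP1 ⟨(a, {b}), h⟩ with ⟨b', hj, he⟩ | ⟨hj, he⟩
  · obtain rfl : b = b' := by simpa using hj
    exact he
  · simp at hj

lemma km2edge_empty (a : A) (h : (∅ : Finset B) ∈ P a) :
    km2edge P ⟨(a, ∅), h⟩ = s(Sum.inl a, Sum.inr (Sum.inr a)) := by
  rw [km2edge, dif_neg (by simp)]

lemma km2edge_inj (hP1 : ∀ a, ∀ j ∈ P a, j.card ≤ 1) : Function.Injective (km2edge P) := by
  intro v w h
  rcases km2edge_spec P hP1 v with ⟨b, hj, he⟩ | ⟨hj, he⟩ <;>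
    rcases km2edge_spec P hP1 w with ⟨b', hj', he'⟩ | ⟨hj', he'⟩ <;>
    rw [he, he'] at h <;> simp [Sym2.eq_iff] at h
  · exact Subtype.ext (Prod.ext h.1 (by rw [hj, hj', h.2]))
  · exact Subtype.ext (Prod.ext h (by rw [hj, hj']))


lemma km2edge_surj (hP1 : ∀ a, ∀ j ∈ P a, j.card ≤ 1) :
    ∀ e : (bipH P).edgeSet, ∃ v, km2edge P v = e.1 := by
  rintro ⟨e, he⟩
  induction e using Sym2.ind with
  | _ x y =>
    rw [SimpleGraph.mem_edgeSet] at he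
    rcases he with ⟨a, b, hm, ⟨hx, hy⟩ | ⟨hy, hx⟩⟩ | ⟨a, hm, ⟨hx, hy⟩ | ⟨hy, hx⟩⟩ <;>
      subst hx <;> subst hy
    · exact ⟨⟨(a, {b}), hm⟩, km2edge_singleton P hP1 a b hm⟩
    · exact ⟨⟨(a, {b}), hm⟩, (km2edge_singleton P hP1 a b hm).trans Sym2.eq_swap⟩
    · exact ⟨⟨(a, ∅), hm⟩, km2edge_empty P a hm⟩
    · exact ⟨⟨(a, ∅), hm⟩, (km2edge_empty P a hm).trans Sym2.eq_swap⟩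

lemma km2edge_inter (hP1 : ∀ a, ∀ j ∈ P a, j.card ≤ 1)
    (v w : {v : A × Finset B // v.2 ∈ P v.1}) :
    ((km2edge P v : Set (A ⊕ (B ⊕ A))) ∩ (km2edge P w : Set (A ⊕ (B ⊕ A)))).Nonempty ↔
      (v.1.1 = w.1.1 ∨ (v.1.2 ∩ w.1.2).Nonempty) := by
  rcases km2edge_spec P hP1 v with ⟨b, hj, he⟩ | ⟨hj, he⟩ <;>
    rcases km2edge_spec P hP1 w with ⟨b', hj', he'⟩ | ⟨hj', he'⟩ <;>
      rw [he, he', hj, hj'] <;>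
      simp [Set.Nonempty, Sym2.mem_iff, Finset.Nonempty] <;> aesop

end Aux

/-- the associated graph of a 1-Matching instance is isomorphic to the
line graph of the bipartite graph `H`, via the map sending `(a, {b})` to the edge
`{a, b}` and `(a, ∅)` to the edge `{a, ∅_a}`. -/
theorem stmt_6 {A B : Type*} [DecidableEq B]
    (P : A → Finset (Finset B))
    (hP1 : ∀ a, ∀ j ∈ P a, j.card ≤ 1) :
    ∃ φ : kmGraph P ≃g SimpleGraph.lineGraph (bipH P),
      (∀ (a : A) (b : B) (h : ({b} : Finset B) ∈ P a),
        ((φ ⟨(a, {b}), h⟩ : (bipH P).edgeSet) : Sym2 (A ⊕ (B ⊕ A))) =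
          s(Sum.inl a, Sum.inr (Sum.inl b))) ∧
      (∀ (a : A) (h : (∅ : Finset B) ∈ P a),
        ((φ ⟨(a, ∅), h⟩ : (bipH P).edgeSet) : Sym2 (A ⊕ (B ⊕ A))) =
          s(Sum.inl a, Sum.inr (Sum.inr a))) := by
  classical
  let f : {v : A × Finset B // v.2 ∈ P v.1} → (bipH P).edgeSet :=
    fun v => ⟨km2edge P v, km2edge_mem P hP1 v⟩
  have hinj : Function.Injective f := fun v w h =>
    km2edge_inj P hP1 (congrArg Subtype.val h)
  have hsurj : Function.Surjective f := by
    intro e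
    obtain ⟨v, hv⟩ := km2edge_surj P hP1 e
    exact ⟨v, Subtype.ext hv⟩
  refine ⟨⟨Equiv.ofBijective f ⟨hinj, hsurj⟩, ?_⟩, ?_, ?_⟩
  · intro v w
    exact and_congr hinj.ne_iff (km2edge_inter P hP1 v w)
  · exact fun a b h => km2edge_singleton P hP1 a b h
  · exact fun a h => km2edge_empty P a h
end
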